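/- Let m be a positive integer and let k, k' be integers with 0 ≤ k, k' ≤ m/2. There exists a positive integer d ≤ m with (3^k+1)·3^d ≡ 3^{k'}+1 (mod 3^m-1) if and only if k = k'. -/
import Mathlib

lemma pow3_unique (a b c : ℕ) (h : 3 ^ a + 3 ^ b = 3 ^ c + 1) :
    (a = c ∧ b = 0) ∨ (a = 0 ∧ b = c) := by
  rcases Nat.eq_zero_or_pos b with hb | hb
  · left
    subst hb
    have : (3:ℕ) ^ a = 3 ^ c := by simpa using h
    exact ⟨Nat.pow_right_injective (by norm_num) this, rfl⟩
  rcases Nat.eq_zero_or_pos a with ha | ha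
  · right
    subst ha
    have : (3:ℕ) ^ b = 3 ^ c := by omega
    exact ⟨rfl, Nat.pow_right_injective (by norm_num) this⟩
  · exfalso
    have h3a : 3 ∣ 3 ^ a := dvd_pow_self 3 (by omega)
    have h3b : 3 ∣ 3 ^ b := dvd_pow_self 3 (by omega)
    rcases Nat.eq_zero_or_pos c with hc | hc
    · subst hc
      have ha' : (3:ℕ) ^ 1 ≤ 3 ^ a := Nat.pow_le_pow_right (by norm_num) ha
      have hb' : (3:ℕ) ^ 1 ≤ 3 ^ b := Nat.pow_le_pow_right (by norm_num) hb
      simp at ha' hb'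
      omega
    · have h3c : 3 ∣ 3 ^ c := dvd_pow_self 3 (by omega)
      omega

lemma pow3_mod (m : ℕ) (hm : 0 < m) (a : ℕ) :
    3 ^ a ≡ 3 ^ (a % m) [MOD 3 ^ m - 1] := by
  conv_lhs => rw [← Nat.div_add_mod a m]
  rw [pow_add, pow_mul]
  have h1 : (3:ℕ) ^ m ≡ 1 [MOD 3 ^ m - 1] :=
    ((Nat.modEq_iff_dvd' (Nat.one_le_pow _ _ (by norm_num))).mpr dvd_rfl).symm
  calc ((3:ℕ) ^ m) ^ (a / m) * 3 ^ (a % m)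
      ≡ 1 ^ (a / m) * 3 ^ (a % m) [MOD 3 ^ m - 1] := (h1.pow _).mul_right _
    _ = 3 ^ (a % m) := by rw [one_pow, one_mul]

theorem stmt_1 (m k k' : ℕ) (hm : 0 < m) (hk : k ≤ m / 2) (hk' : k' ≤ m / 2) :
    (∃ d, 0 < d ∧ d ≤ m ∧ (3 ^ k + 1) * 3 ^ d ≡ 3 ^ k' + 1 [MOD 3 ^ m - 1]) ↔ k = k' := by
  constructor
  · rintro ⟨d, hd0, hdm, hcong⟩
    rcases Nat.lt_or_ge m 2 with hm2 | hm2
    · -- m = 1, so k = k' = 0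
      omega
    -- m ≥ 2
    set N := 3 ^ m - 1 with hN
    set a := (k + d) % m with haDef
    set b := d % m with hbDef
    have e1 : (3 ^ k + 1) * 3 ^ d = 3 ^ (k + d) + 3 ^ d := by ring
    have h2 : 3 ^ a + 3 ^ b ≡ 3 ^ (k + d) + 3 ^ d [MOD N] :=
      (pow3_mod m hm (k + d)).symm.add (pow3_mod m hm d).symm
    have hfin : 3 ^ a + 3 ^ b ≡ 3 ^ k' + 1 [MOD N] := h2.trans (e1 ▸ hcong)
    -- bounds
    have h3m1 : (3:ℕ) ^ 1 ≤ 3 ^ (m - 1) := Nat.pow_le_pow_right (by norm_num) (by omega)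
    have h3m : (3:ℕ) ^ m = 3 * 3 ^ (m - 1) := by
      rw [← pow_succ']
      congr 1
      omega
    have ham : a < m := Nat.mod_lt _ hm
    have hbm : b < m := Nat.mod_lt _ hm
    have hpa : (3:ℕ) ^ a ≤ 3 ^ (m - 1) := Nat.pow_le_pow_right (by norm_num) (by omega)
    have hpb : (3:ℕ) ^ b ≤ 3 ^ (m - 1) := Nat.pow_le_pow_right (by norm_num) (by omega)
    have hpk' : (3:ℕ) ^ k' ≤ 3 ^ (m - 1) := by
      apply Nat.pow_le_pow_right (by norm_num)
      omega
    have hS : 3 ^ a + 3 ^ b < N := by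
      have : (3:ℕ) ^ 1 = 3 := by norm_num
      omega
    have hT : 3 ^ k' + 1 < N := by
      have : (3:ℕ) ^ 1 = 3 := by norm_num
      omega
    have hEq : 3 ^ a + 3 ^ b = 3 ^ k' + 1 := by
      have := hfin
      unfold Nat.ModEq at this
      rwa [Nat.mod_eq_of_lt hS, Nat.mod_eq_of_lt hT] at this
    rcases pow3_unique a b k' hEq with ⟨hak, hb0⟩ | ⟨ha0, hbk⟩
    · -- d % m = 0, so d = m, so a = k % m = k
      have hdm' : d = m := by
        have h := Nat.dvd_of_mod_eq_zero hb0
        exact Nat.le_antisymm hdm (Nat.le_of_dvd hd0 h)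
      subst hdm'
      have : a = k := by
        rw [haDef, Nat.add_mod_right, Nat.mod_eq_of_lt (by omega)]
      omega
    · -- (k+d) % m = 0 and d % m = k'
      have hmd : m ∣ k + d := Nat.dvd_of_mod_eq_zero ha0
      rcases Nat.lt_or_ge d m with hdlt | hdge
      · have hdk' : d = k' := by
          rw [← hbk, hbDef, Nat.mod_eq_of_lt hdlt]
        subst hdk'
        have hle : m ≤ k + d := Nat.le_of_dvd (by omega) hmd
        omega
      · have hdm' : d = m := by omega
        have hk'0 : k' = 0 := by
          rw [← hbk, hbDef, hdm', Nat.mod_self]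
        have hmk : m ∣ k := by
          have : m ∣ k + m := by rwa [hdm'] at hmd
          exact (Nat.dvd_add_right (dvd_refl m)).mp (by rwa [Nat.add_comm] at this)
        have : k = 0 := Nat.eq_zero_of_dvd_of_lt hmk (by omega)
        omega
  · rintro rfl
    refine ⟨m, hm, le_refl m, ?_⟩
    have h1 : (3:ℕ) ^ m ≡ 1 [MOD 3 ^ m - 1] :=
      ((Nat.modEq_iff_dvd' (Nat.one_le_pow _ _ (by norm_num))).mpr dvd_rfl).symm
    calc (3 ^ k + 1) * 3 ^ m ≡ (3 ^ k + 1) * 1 [MOD 3 ^ m - 1] := h1.mul_left _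
      _ = 3 ^ k + 1 := by rw [mul_one]
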